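/- Let M_{1,1}, M_{1,0} be {0,1}-valued random variables and Y_{1,1}, Y_{1,0} integrable random variables with P(M_{1,1} > M_{1,0}) ≠ P(M_{1,1} < M_{1,0}). Then E[Y_{1,M_{1,1}} − Y_{1,M_{1,0}}] / E[M_{1,1} − M_{1,0}] = ( E[(Y_{1,1} − Y_{1,0})·1{M_{1,1} > M_{1,0}}] − E[(Y_{1,1} − Y_{1,0})·1{M_{1,1} < M_{1,0}}] ) / ( P(M_{1,1} > M_{1,0}) − P(M_{1,1} < M_{1,0}) ), so the Wald-type IV coefficient α₁^{IV} is a weighted difference of the average effects Y_{1,1} − Y_{1,0} for those with M_{1,1} > M_{1,0} and those with M_{1,1} < M_{1,0}. -/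

import Mathlib

open MeasureTheory ProbabilityTheory

/-- Conditional mean `E[W | A] = E[W·1_A] / P(A)` (set integral divided by probability). -/
noncomputable def condMean {Ω : Type*} [MeasurableSpace Ω] (P : Measure Ω)
    (W : Ω → ℝ) (A : Set Ω) : ℝ :=
  (∫ ω in A, W ω ∂P) / (P A).toReal

/-- A `{0,1}`-valued (Bool-coded) random variable, viewed as a real number. -/
noncomputable def bR (b : Bool) : ℝ := if b then 1 else 0

/-- the Wald-type IV coefficient `α₁^{IV}` is a weighted difference of the
average effects `Y_{1,1} - Y_{1,0}` over those with `M_{1,1} > M_{1,0}` and those with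
`M_{1,1} < M_{1,0}`. -/
theorem stmt_5 {Ω : Type*} [MeasurableSpace Ω] (P : Measure Ω) [IsProbabilityMeasure P]
    (M11 M10 : Ω → Bool) (Y1 : Bool → Ω → ℝ)
    (hM11 : Measurable M11) (hM10 : Measurable M10)
    (hY : ∀ m, Integrable (Y1 m) P)
    (hne : (P {ω | M10 ω < M11 ω}).toReal ≠ (P {ω | M11 ω < M10 ω}).toReal) :
    (∫ ω, (Y1 (M11 ω) ω - Y1 (M10 ω) ω) ∂P) / (∫ ω, (bR (M11 ω) - bR (M10 ω)) ∂P)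
      = ((∫ ω in {ω | M10 ω < M11 ω}, (Y1 true ω - Y1 false ω) ∂P)
          - (∫ ω in {ω | M11 ω < M10 ω}, (Y1 true ω - Y1 false ω) ∂P))
        / ((P {ω | M10 ω < M11 ω}).toReal - (P {ω | M11 ω < M10 ω}).toReal) := by
  set A : Set Ω := {ω | M10 ω < M11 ω} with hA
  set B : Set Ω := {ω | M11 ω < M10 ω} with hB
  have hAeq : A = M10 ⁻¹' {false} ∩ M11 ⁻¹' {true} := by
    ext ω; simp [hA, Bool.lt_iff, Set.mem_setOf_eq, and_comm]
  have hBeq : B = M11 ⁻¹' {false} ∩ M10 ⁻¹' {true} := by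
    ext ω; simp [hB, Bool.lt_iff, Set.mem_setOf_eq, and_comm]
  have hAm : MeasurableSet A := by
    rw [hAeq]
    exact (hM10 (measurableSet_singleton false)).inter (hM11 (measurableSet_singleton true))
  have hBm : MeasurableSet B := by
    rw [hBeq]
    exact (hM11 (measurableSet_singleton false)).inter (hM10 (measurableSet_singleton true))
  set f : Ω → ℝ := fun ω => Y1 true ω - Y1 false ω with hf
  have hfint : Integrable f P := (hY true).sub (hY false)
  -- numerator pointwise identity
  have hnum : ∀ ω, Y1 (M11 ω) ω - Y1 (M10 ω) ω = A.indicator f ω - B.indicator f ω := by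
    intro ω
    rcases Bool.eq_false_or_eq_true (M11 ω) with h1 | h1 <;>
      rcases Bool.eq_false_or_eq_true (M10 ω) with h2 | h2 <;>
      simp [Set.indicator_apply, hA, hB, Set.mem_setOf_eq, h1, h2, hf]
  have hden : ∀ ω, bR (M11 ω) - bR (M10 ω)
      = A.indicator (fun _ => (1:ℝ)) ω - B.indicator (fun _ => (1:ℝ)) ω := by
    intro ω
    rcases Bool.eq_false_or_eq_true (M11 ω) with h1 | h1 <;>
      rcases Bool.eq_false_or_eq_true (M10 ω) with h2 | h2 <;>
      simp [Set.indicator_apply, hA, hB, Set.mem_setOf_eq, h1, h2, bR]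
  have hnumint : (∫ ω, (Y1 (M11 ω) ω - Y1 (M10 ω) ω) ∂P)
      = (∫ ω in A, f ω ∂P) - (∫ ω in B, f ω ∂P) := by
    simp_rw [hnum]
    rw [integral_sub (hfint.indicator hAm) (hfint.indicator hBm),
      integral_indicator hAm, integral_indicator hBm]
  have hdenint : (∫ ω, (bR (M11 ω) - bR (M10 ω)) ∂P)
      = (P A).toReal - (P B).toReal := by
    simp_rw [hden]
    have h1 : Integrable (A.indicator (fun _ => (1:ℝ))) P :=
      (integrable_const 1).indicator hAm
    have h2 : Integrable (B.indicator (fun _ => (1:ℝ))) P :=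
      (integrable_const 1).indicator hBm
    rw [integral_sub h1 h2, integral_indicator hAm, integral_indicator hBm]
    simp [Measure.restrict_apply_univ, measureReal_def]
  rw [hnumint, hdenint]
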